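/- For Γ = ℤ, every derivation of W(ℤ) can be written uniquely as ad_y + c·D₀ for some y ∈ W(ℤ) and c ∈ ℂ, where D₀ is the derivation determined by D₀(L_{n,i}) = n·L_{n,i} for n ∈ ℤ, i ∈ ℤ≥0. -/

import Mathlib

open Module

section
variable {W : Type} [LieRing W] [LieAlgebra ℂ W]

def rmulW (z : W) : W →ₗ[ℂ] W where
  toFun x := ⁅x, z⁆
  map_add' a b := add_lie a b z
  map_smul' c a := smul_lie c a z

@[simp] lemma rmulW_apply (z x : W) : rmulW z x = ⁅x, z⁆ := rfl

def lmulW (z : W) : W →ₗ[ℂ] W where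
  toFun x := ⁅z, x⁆
  map_add' a b := lie_add z a b
  map_smul' c a := lie_smul c z a

@[simp] lemma lmulW_apply (z x : W) : lmulW z x = ⁅z, x⁆ := rfl

variable (B : Basis (ℤ × ℕ) ℂ W)

variable (hB : ∀ (m n : ℤ) (i j : ℕ),
      ⁅B (m, i), B (n, j)⁆ = ((n : ℂ) - (m : ℂ)) • B (m + n, i + j)
        + ((j : ℂ) - (i : ℂ)) • B (m + n, i + j + 1))

include hB

theorem brL (x : W) (n : ℤ) (j : ℕ) (p : ℤ) (q : ℕ) (hq : q < j) :
    B.repr ⁅x, B (n, j)⁆ (p, q) = 0 := by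
  have key : (B.coord (p, q)) ∘ₗ (rmulW (B (n, j))) = 0 := by
    apply B.ext
    rintro ⟨s, k⟩
    simp only [LinearMap.comp_apply, rmulW_apply, Basis.coord_apply, LinearMap.zero_apply]
    rw [hB]
    simp only [map_add, map_smul, Basis.repr_self, Finsupp.coe_add, Finsupp.coe_smul,
      Pi.add_apply, Pi.smul_apply, Finsupp.single_apply, Prod.mk.injEq, smul_eq_mul]
    rw [if_neg (by omega : ¬(s + n = p ∧ k + j = q)),
        if_neg (by omega : ¬(s + n = p ∧ k + j + 1 = q))]
    ring
  exact LinearMap.congr_fun key x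

theorem brE (x : W) (n : ℤ) (j : ℕ) (p : ℤ) :
    B.repr ⁅x, B (n, j)⁆ (p, j) = (2*(n:ℂ) - (p:ℂ)) * B.repr x (p - n, 0) := by
  have key : (B.coord (p, j)) ∘ₗ (rmulW (B (n, j)))
      = (2*(n:ℂ) - (p:ℂ)) • B.coord (p - n, 0) := by
    apply B.ext
    rintro ⟨s, k⟩
    simp only [LinearMap.comp_apply, rmulW_apply, Basis.coord_apply, LinearMap.smul_apply,
      smul_eq_mul]
    rw [hB]
    simp only [map_add, map_smul, Basis.repr_self, Finsupp.coe_add, Finsupp.coe_smul,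
      Pi.add_apply, Pi.smul_apply, Finsupp.single_apply, Prod.mk.injEq, smul_eq_mul]
    rw [if_neg (by omega : ¬(s + n = p ∧ k + j + 1 = j))]
    by_cases hs : s + n = p
    · by_cases hk : k = 0
      · subst hk
        rw [if_pos (by omega : s + n = p ∧ 0 + j = j), if_pos (by omega : s = p - n ∧ (0:ℕ) = 0)]
        have : (s : ℂ) = (p : ℂ) - (n : ℂ) := by
          have : s = p - n := by omega
          rw [this]; push_cast; ring
        rw [this]; ring
      · rw [if_neg (by omega : ¬(s + n = p ∧ k + j = j)),
            if_neg (by omega : ¬(s = p - n ∧ k = 0))]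
        ring
    · rw [if_neg (by omega : ¬(s + n = p ∧ k + j = j)),
          if_neg (by omega : ¬(s = p - n ∧ k = 0))]
      ring
  exact LinearMap.congr_fun key x

theorem brS (x : W) (n : ℤ) (j : ℕ) (p : ℤ) (q : ℕ) :
    B.repr ⁅x, B (n, j)⁆ (p, q + j + 1)
      = (2*(n:ℂ) - (p:ℂ)) * B.repr x (p - n, q + 1) + ((j:ℂ) - (q:ℂ)) * B.repr x (p - n, q) := by
  have key : (B.coord (p, q + j + 1)) ∘ₗ (rmulW (B (n, j)))
      = (2*(n:ℂ) - (p:ℂ)) • B.coord (p - n, q + 1) + ((j:ℂ) - (q:ℂ)) • B.coord (p - n, q) := by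
    apply B.ext
    rintro ⟨s, k⟩
    simp only [LinearMap.comp_apply, rmulW_apply, Basis.coord_apply, LinearMap.add_apply,
      LinearMap.smul_apply, smul_eq_mul]
    rw [hB]
    simp only [map_add, map_smul, Basis.repr_self, Finsupp.coe_add, Finsupp.coe_smul,
      Pi.add_apply, Pi.smul_apply, Finsupp.single_apply, Prod.mk.injEq, smul_eq_mul]
    by_cases hs : s + n = p
    · have hsc : (s : ℂ) = (p : ℂ) - (n : ℂ) := by
        have : s = p - n := by omega
        rw [this]; push_cast; ring
      by_cases hk1 : k = q + 1
      · subst hk1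
        rw [if_pos (by omega : s + n = p ∧ q + 1 + j = q + j + 1),
            if_neg (by omega : ¬(s + n = p ∧ q + 1 + j + 1 = q + j + 1)),
            if_pos (by omega : s = p - n ∧ q + 1 = q + 1),
            if_neg (by omega : ¬(s = p - n ∧ q + 1 = q))]
        rw [hsc]; ring
      · by_cases hk2 : k = q
        · subst hk2
          rw [if_neg (by omega : ¬(s + n = p ∧ k + j = k + j + 1)),
              if_pos (by omega : s + n = p ∧ k + j + 1 = k + j + 1),
              if_neg (by omega : ¬(s = p - n ∧ k = k + 1)),
              if_pos (by omega : s = p - n ∧ k = k)]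
          ring
        · rw [if_neg (by omega : ¬(s + n = p ∧ k + j = q + j + 1)),
              if_neg (by omega : ¬(s + n = p ∧ k + j + 1 = q + j + 1)),
              if_neg (by omega : ¬(s = p - n ∧ k = q + 1)),
              if_neg (by omega : ¬(s = p - n ∧ k = q))]
          ring
    · rw [if_neg (by omega : ¬(s + n = p ∧ k + j = q + j + 1)),
          if_neg (by omega : ¬(s + n = p ∧ k + j + 1 = q + j + 1)),
          if_neg (by omega : ¬(s = p - n ∧ k = q + 1)),
          if_neg (by omega : ¬(s = p - n ∧ k = q))]
      ring
  exact LinearMap.congr_fun key x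



theorem Ecoord0 (x : W) (p : ℤ) :
    B.repr ⁅B (0,0), x⁆ (p, 0) = (p:ℂ) * B.repr x (p, 0) := by
  have h := brE B hB x 0 0 p
  have hsk : ⁅B (0,0), x⁆ = -⁅x, B (0,0)⁆ := by rw [lie_skew]
  rw [hsk, map_neg]
  simp only [Finsupp.coe_neg, Pi.neg_apply]
  rw [h]
  simp only [sub_zero]
  push_cast
  ring

theorem EcoordS (x : W) (p : ℤ) (q : ℕ) :
    B.repr ⁅B (0,0), x⁆ (p, q + 1)
      = (p:ℂ) * B.repr x (p, q + 1) + (q:ℂ) * B.repr x (p, q) := by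
  have h := brS B hB x 0 0 p q
  have hsk : ⁅B (0,0), x⁆ = -⁅x, B (0,0)⁆ := by rw [lie_skew]
  rw [hsk, map_neg]
  simp only [Finsupp.coe_neg, Pi.neg_apply]
  rw [show q + 0 + 1 = q + 1 from rfl] at h
  rw [h]
  simp only [sub_zero]
  push_cast
  ring

/-- eigenvectors of ad(L_{0,0}) with eigenvalue n are multiples of L_{n,0} -/
theorem lemK (v : W) (n : ℤ) (h : ⁅B (0,0), v⁆ = (n:ℂ) • v) :
    v = B.repr v (n, 0) • B (n, 0) := by
  have hx0 : ∀ p : ℤ, (p:ℂ) * B.repr v (p,0) = (n:ℂ) * B.repr v (p,0) := by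
    intro p
    have := Ecoord0 B hB v p
    rw [h] at this
    simpa using this.symm
  have hxS : ∀ (p : ℤ) (q : ℕ),
      (p:ℂ) * B.repr v (p,q+1) + (q:ℂ) * B.repr v (p,q) = (n:ℂ) * B.repr v (p,q+1) := by
    intro p q
    have := EcoordS B hB v p q
    rw [h] at this
    simpa using this.symm
  have hne : ∀ p : ℤ, p ≠ n → ∀ q : ℕ, B.repr v (p,q) = 0 := by
    intro p hp
    have hpc : (p:ℂ) - (n:ℂ) ≠ 0 := by
      intro hc
      apply hp
      exact_mod_cast sub_eq_zero.mp hc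
    intro q
    induction q with
    | zero =>
      have h2 : ((p:ℂ) - (n:ℂ)) * B.repr v (p,0) = 0 := by
        linear_combination (hx0 p)
      exact (mul_eq_zero.mp h2).resolve_left hpc
    | succ q ih =>
      have := hxS p q
      rw [ih, mul_zero, add_zero] at this
      have h2 : ((p:ℂ) - (n:ℂ)) * B.repr v (p,q+1) = 0 := by
        rw [sub_mul, this]; ring
      exact (mul_eq_zero.mp h2).resolve_left hpc
  have hnk : ∀ k : ℕ, k ≠ 0 → B.repr v (n,k) = 0 := by
    intro k hk
    have h2 : (k:ℂ) * B.repr v (n,k) = 0 := by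
      linear_combination (hxS n k)
    have hkc : (k:ℂ) ≠ 0 := Nat.cast_ne_zero.mpr hk
    exact (mul_eq_zero.mp h2).resolve_left hkc
  apply B.repr.injective
  rw [map_smul, Basis.repr_self, Finsupp.smul_single, smul_eq_mul, mul_one]
  ext ⟨p, q⟩
  rw [Finsupp.single_apply]
  by_cases hp : (n, (0:ℕ)) = (p, q)
  · cases hp; rw [if_pos rfl]
  · rw [if_neg hp]
    by_cases hpn : p = n
    · subst hpn
      have hq : q ≠ 0 := by rintro rfl; exact hp rfl
      exact hnk q hq
    · exact hne p hpn q
end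


section
variable {W : Type} [LieRing W] [LieAlgebra ℂ W]
variable (B : Basis (ℤ × ℕ) ℂ W)

noncomputable def D0 : W →ₗ[ℂ] W := B.constr ℂ (fun p => (p.1 : ℂ) • B p)

noncomputable def Tshift : W →ₗ[ℂ] W := B.constr ℂ (fun p => B (p.1 - 1, p.2))

@[simp] lemma D0_basis (n : ℤ) (i : ℕ) : D0 B (B (n, i)) = (n : ℂ) • B (n, i) :=
  B.constr_basis ℂ _ _

@[simp] lemma Tshift_basis (n : ℤ) (i : ℕ) : Tshift B (B (n, i)) = B (n - 1, i) :=
  B.constr_basis ℂ _ _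

variable (hB : ∀ (m n : ℤ) (i j : ℕ),
      ⁅B (m, i), B (n, j)⁆ = ((n : ℂ) - (m : ℂ)) • B (m + n, i + j)
        + ((j : ℂ) - (i : ℂ)) • B (m + n, i + j + 1))
include hB

theorem D0_leib (x y : W) : D0 B ⁅x, y⁆ = ⁅D0 B x, y⁆ + ⁅x, D0 B y⁆ := by
  have claim1 : ∀ (j : ℤ × ℕ) (x : W),
      D0 B ⁅x, B j⁆ = ⁅D0 B x, B j⁆ + ⁅x, D0 B (B j)⁆ := by
    rintro ⟨n, j⟩ x
    have key : (D0 B) ∘ₗ (rmulW (B (n, j)))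
        = (rmulW (B (n, j))) ∘ₗ (D0 B) + (rmulW (D0 B (B (n, j)))) := by
      apply B.ext
      rintro ⟨m, i⟩
      simp only [LinearMap.comp_apply, LinearMap.add_apply, rmulW_apply, D0_basis]
      rw [hB]
      simp only [map_add, map_smul, D0_basis, smul_lie, lie_smul, hB]
      rw [smul_smul, smul_smul]
      push_cast
      module
    exact LinearMap.congr_fun key x
  have key2 : (D0 B) ∘ₗ (lmulW x) = (lmulW (D0 B x)) + (lmulW x) ∘ₗ (D0 B) := by
    apply B.ext
    rintro j
    simp only [LinearMap.comp_apply, LinearMap.add_apply, lmulW_apply]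
    exact claim1 j x
  have := LinearMap.congr_fun key2 y
  simpa using this

theorem Id1 (v : W) : ⁅B (0, 0), Tshift B v⁆ = Tshift B ⁅B (0, 0), v⁆ - Tshift B v := by
  have key : (lmulW (B (0, 0))) ∘ₗ (Tshift B)
      = (Tshift B) ∘ₗ (lmulW (B (0, 0))) - (Tshift B) := by
    apply B.ext
    rintro ⟨s, k⟩
    simp only [LinearMap.comp_apply, LinearMap.sub_apply, lmulW_apply, Tshift_basis]
    rw [hB, hB]
    simp only [map_add, map_smul, Tshift_basis, zero_add, Nat.cast_zero, sub_zero]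
    push_cast
    module
  exact LinearMap.congr_fun key v

end


section
variable {W : Type} [LieRing W] [LieAlgebra ℂ W]
variable (B : Basis (ℤ × ℕ) ℂ W)
variable (hB : ∀ (m n : ℤ) (i j : ℕ),
      ⁅B (m, i), B (n, j)⁆ = ((n : ℂ) - (m : ℂ)) • B (m + n, i + j)
        + ((j : ℂ) - (i : ℂ)) • B (m + n, i + j + 1))
include hB

theorem Id2 (v : W) : Tshift B ⁅v, B (1, 0)⁆ = v - ⁅B (0, 0), v⁆ := by
  have key : (Tshift B) ∘ₗ (rmulW (B (1, 0)))
      = LinearMap.id - (lmulW (B (0, 0))) := by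
    apply B.ext
    rintro ⟨s, k⟩
    simp only [LinearMap.comp_apply, LinearMap.sub_apply, LinearMap.id_apply,
      rmulW_apply, lmulW_apply]
    rw [hB, hB]
    simp only [map_add, map_smul, Tshift_basis, zero_add, add_zero, Nat.cast_zero]
    have h1 : s + 1 - 1 = s := by ring
    rw [h1]
    push_cast
    module
  exact LinearMap.congr_fun key v

/-- Step 1: `y₁ := T (D L₁₀) - D L₀₀` satisfies `⁅y₁, L₀₀⁆ = D L₀₀`. -/
theorem step1 (a X : W) (hX : X = ⁅a, B (1, 0)⁆ + ⁅B (0, 0), X⁆) :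
    ⁅Tshift B X - a, B (0, 0)⁆ = a := by
  have hmain : ⁅B (0, 0), Tshift B X - a⁆ = -a := by
    rw [lie_sub]
    rw [Id1 B hB X]
    have hEX : ⁅B (0, 0), X⁆ = X - ⁅a, B (1, 0)⁆ := by
      rw [eq_sub_iff_add_eq, add_comm]
      exact hX.symm
    rw [hEX, map_sub, Id2 B hB a]
    abel
  have hsk : ⁅Tshift B X - a, B (0, 0)⁆ = -⁅B (0, 0), Tshift B X - a⁆ := by
    rw [← lie_skew]  -- may need orientation fix
  rw [hsk, hmain, neg_neg]

end


theorem lam_linear (lam : ℤ → ℂ) (h0 : lam 0 = 0)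
    (hadd : ∀ m n : ℤ, m ≠ n → lam (m + n) = lam m + lam n) :
    ∀ n : ℤ, lam n = (n : ℂ) * lam 1 := by
  have hneg : ∀ n : ℤ, n ≠ 0 → lam (-n) = -lam n := by
    intro n hn
    have h := hadd n (-n) (by omega)
    rw [show n + -n = 0 by ring, h0] at h
    linear_combination -h
  have e3 : lam 3 = lam 1 + lam 2 := by have := hadd 1 2 (by norm_num); norm_num at this; exact this
  have e4 : lam 4 = lam 1 + lam 3 := by have := hadd 1 3 (by norm_num); norm_num at this; exact this
  have e5 : lam 5 = lam 1 + lam 4 := by have := hadd 1 4 (by norm_num); norm_num at this; exact this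
  have e23 : lam 5 = lam 2 + lam 3 := by have := hadd 2 3 (by norm_num); norm_num at this; exact this
  have h2 : lam 2 = 2 * lam 1 := by linear_combination e5 + e4 - e23
  have hnat : ∀ k : ℕ, lam (k : ℤ) = (k : ℂ) * lam 1 := by
    intro k
    induction k with
    | zero => simpa using h0
    | succ k ih =>
      rcases Nat.eq_zero_or_pos k with hk | hk
      · subst hk; simpa using rfl
      · rcases eq_or_ne k 1 with hk1 | hk1
        · subst hk1; norm_num; linear_combination h2
        · have hkz : (k : ℤ) ≠ 1 := by exact_mod_cast hk1
          have := hadd (k : ℤ) 1 hkz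
          push_cast
          rw [this, ih]
          ring
  intro n
  rcases Int.eq_nat_or_neg n with ⟨k, rfl | rfl⟩
  · exact hnat k
  · rcases Nat.eq_zero_or_pos k with hk | hk
    · subst hk; simpa using h0
    · have hkz : (k : ℤ) ≠ 0 := by exact_mod_cast hk.ne'
      rw [hneg _ hkz, hnat k]
      push_cast
      ring

section
variable {W : Type} [LieRing W] [LieAlgebra ℂ W]
variable (B : Basis (ℤ × ℕ) ℂ W)

theorem smul_basis_inj (i : ℤ × ℕ) (α β : ℂ) (h : α • B i = β • B i) : α = β := by
  have := congrArg (fun w => B.repr w i) h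
  simpa [Basis.repr_self] using this

theorem two_basis_zero (i j : ℤ × ℕ) (hij : i ≠ j) (α β : ℂ)
    (h : α • B i + β • B j = 0) : α = 0 ∧ β = 0 := by
  constructor
  · have hji : j ≠ i := Ne.symm hij
    have := congrArg (fun w => B.repr w i) h
    simpa [Basis.repr_self, Finsupp.single_apply, hji] using this
  · have := congrArg (fun w => B.repr w j) h
    simpa [Basis.repr_self, Finsupp.single_apply, hij] using this

end


section
variable {W : Type} [LieRing W] [LieAlgebra ℂ W]
variable (B : Basis (ℤ × ℕ) ℂ W)
variable (hB : ∀ (m n : ℤ) (i j : ℕ),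
      ⁅B (m, i), B (n, j)⁆ = ((n : ℂ) - (m : ℂ)) • B (m + n, i + j)
        + ((j : ℂ) - (i : ℂ)) • B (m + n, i + j + 1))
include hB

theorem Fcoord0 (x : W) (p : ℤ) : B.repr ⁅B (0, 1), x⁆ (p, 0) = 0 := by
  have hsk : ⁅B (0, 1), x⁆ = -⁅x, B (0, 1)⁆ := by rw [lie_skew]
  rw [hsk, map_neg]
  simp only [Finsupp.coe_neg, Pi.neg_apply]
  rw [brL B hB x 0 1 p 0 (by norm_num)]
  ring

theorem Fcoord1 (x : W) (p : ℤ) :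
    B.repr ⁅B (0, 1), x⁆ (p, 1) = (p : ℂ) * B.repr x (p, 0) := by
  have hsk : ⁅B (0, 1), x⁆ = -⁅x, B (0, 1)⁆ := by rw [lie_skew]
  rw [hsk, map_neg]
  simp only [Finsupp.coe_neg, Pi.neg_apply]
  rw [brE B hB x 0 1 p]
  simp only [sub_zero]
  push_cast
  ring

theorem FcoordS (x : W) (p : ℤ) (q : ℕ) :
    B.repr ⁅B (0, 1), x⁆ (p, q + 1 + 1)
      = (p : ℂ) * B.repr x (p, q + 1) + ((q : ℂ) - 1) * B.repr x (p, q) := by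
  have hsk : ⁅B (0, 1), x⁆ = -⁅x, B (0, 1)⁆ := by rw [lie_skew]
  rw [hsk, map_neg]
  simp only [Finsupp.coe_neg, Pi.neg_apply]
  rw [brS B hB x 0 1 p q]
  simp only [sub_zero]
  push_cast
  ring

theorem brS0 (x : W) (n : ℤ) (p : ℤ) (q : ℕ) :
    B.repr ⁅x, B (n, 0)⁆ (p, q + 1)
      = (2*(n:ℂ) - (p:ℂ)) * B.repr x (p - n, q + 1) - (q:ℂ) * B.repr x (p - n, q) := by
  have h := brS B hB x n 0 p q
  simp only [Nat.add_zero] at h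
  rw [h]
  push_cast
  ring

theorem Ecoord1 (x : W) (p : ℤ) :
    B.repr ⁅B (0, 0), x⁆ (p, 1) = (p : ℂ) * B.repr x (p, 1) := by
  have h := EcoordS B hB x p 0
  simpa using h

end

section

variable {W : Type} [LieRing W] [LieAlgebra ℂ W]
variable (B : Basis (ℤ × ℕ) ℂ W)
variable (hB : ∀ (m n : ℤ) (i j : ℕ),
      ⁅B (m, i), B (n, j)⁆ = ((n : ℂ) - (m : ℂ)) • B (m + n, i + j)
        + ((j : ℂ) - (i : ℂ)) • B (m + n, i + j + 1))
include hB

theorem step3 (D2 : W →ₗ[ℂ] W)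
    (hL2 : ∀ x y : W, D2 ⁅x, y⁆ = ⁅D2 x, y⁆ + ⁅x, D2 y⁆)
    (h20 : ∀ n : ℤ, D2 (B (n, 0)) = 0) :
    D2 (B (0, 1)) = (B.repr (D2 (B (0, 1))) (0, 2)) • B (0, 2) := by
  have hA : ∀ n : ℤ, (2 * (n : ℂ)) • D2 (B (n, 1)) - ⁅B (0, 0), D2 (B (n, 1))⁆
      = ⁅D2 (B (0, 1)), B (n, 0)⁆ := by
    intro n
    have ha := hL2 (B (0, 1)) (B (n, 0))
    rw [hB 0 n 1 0, h20 n, lie_zero, add_zero] at ha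
    have hb := hL2 (B (0, 0)) (B (n, 1))
    rw [hB 0 n 0 1, h20 0, zero_lie, zero_add] at hb
    simp only [zero_add, add_zero, Nat.reduceAdd, Nat.cast_zero, Nat.cast_one, sub_zero,
      zero_sub, neg_smul, one_smul, map_add, map_smul, map_neg] at ha hb
    rw [← ha, ← hb]
    module
  have hC : ∀ n : ℤ, (n : ℂ) • (⁅B (0, 0), D2 (B (n, 1))⁆ - (n : ℂ) • D2 (B (n, 1)))
      = ⁅D2 (B (0, 1)), B (n, 1)⁆ + ⁅B (0, 1), D2 (B (n, 1))⁆ := by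
    intro n
    have hc := hL2 (B (0, 1)) (B (n, 1))
    rw [hB 0 n 1 1] at hc
    have hb := hL2 (B (0, 0)) (B (n, 1))
    rw [hB 0 n 0 1, h20 0, zero_lie, zero_add] at hb
    simp only [zero_add, add_zero, Nat.reduceAdd, Nat.cast_zero, Nat.cast_one, sub_zero,
      zero_sub, neg_smul, one_smul, sub_self, zero_smul, map_add, map_smul, map_neg,
      map_zero] at hc hb
    have hY : D2 (B (n, 2)) = ⁅B (0, 0), D2 (B (n, 1))⁆ - (n : ℂ) • D2 (B (n, 1)) := by
      rw [← hb]; module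
    rw [← hY, ← hc]
    module
  have hxy : ∀ n p : ℤ, p ≠ 2 * n → ∀ q : ℕ,
      B.repr (D2 (B (n, 1))) (p, q) = B.repr (D2 (B (0, 1))) (p - n, q) := by
    intro n p hp
    have hpc : 2 * (n : ℂ) - (p : ℂ) ≠ 0 := by
      intro h
      apply hp
      have h2 : ((p : ℤ) : ℂ) = ((2 * n : ℤ) : ℂ) := by push_cast; linear_combination -h
      exact_mod_cast h2
    intro q
    induction q with
    | zero =>
      have h := congrArg (fun w => B.repr w (p, 0)) (hA n)
      simp only [map_sub, map_smul, Finsupp.coe_sub, Finsupp.coe_smul, Pi.sub_apply,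
        Pi.smul_apply, smul_eq_mul] at h
      rw [Ecoord0 B hB, brE B hB] at h
      have h2 : (2 * (n:ℂ) - p) * (B.repr (D2 (B (n, 1))) (p, 0)
          - B.repr (D2 (B (0, 1))) (p - n, 0)) = 0 := by
        linear_combination h
      have h3 := (mul_eq_zero.mp h2).resolve_left hpc
      linear_combination h3
    | succ q ih =>
      have h := congrArg (fun w => B.repr w (p, q + 1)) (hA n)
      simp only [map_sub, map_smul, Finsupp.coe_sub, Finsupp.coe_smul, Pi.sub_apply,
        Pi.smul_apply, smul_eq_mul] at h
      rw [EcoordS B hB, brS0 B hB, ih] at h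
      have h2 : (2 * (n:ℂ) - p) * (B.repr (D2 (B (n, 1))) (p, q + 1)
          - B.repr (D2 (B (0, 1))) (p - n, q + 1)) = 0 := by
        linear_combination h
      have h3 := (mul_eq_zero.mp h2).resolve_left hpc
      linear_combination h3
  have hrel : ∀ t : ℤ,
      ((t:ℂ) * B.repr (D2 (B (0, 1))) (t, 0) = 0) ∧
      ((t:ℂ) * B.repr (D2 (B (0, 1))) (t, 1) = 2 * B.repr (D2 (B (0, 1))) (t, 0)) ∧
      (∀ q : ℕ, (t:ℂ) * B.repr (D2 (B (0, 1))) (t, q + 1 + 1)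
        = (1 - (q:ℂ)) * B.repr (D2 (B (0, 1))) (t, q + 1)) := by
    intro t
    set n : ℤ := if t = 1 then 2 else 1 with hn
    have hn0 : n ≠ 0 := by rw [hn]; split_ifs <;> norm_num
    have hnt : t ≠ n := by rw [hn]; split_ifs with h <;> omega
    have hnc : (n:ℂ) ≠ 0 := Int.cast_ne_zero.mpr hn0
    set p : ℤ := t + n with hpdef
    have hp2 : p ≠ 2 * n := by omega
    have hpn : p - n = t := by omega
    have hptc : (p : ℂ) = (t : ℂ) + (n : ℂ) := by rw [hpdef]; push_cast; ring
    have hx : ∀ q, B.repr (D2 (B (n, 1))) (p, q) = B.repr (D2 (B (0, 1))) (t, q) := by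
      intro q
      rw [hxy n p hp2 q, hpn]
    refine ⟨?_, ?_, ?_⟩
    · have h := congrArg (fun w => B.repr w (p, 0)) (hC n)
      simp only [map_sub, map_smul, map_add, Finsupp.coe_sub, Finsupp.coe_smul,
        Finsupp.coe_add, Pi.sub_apply, Pi.smul_apply, Pi.add_apply, smul_eq_mul] at h
      rw [Ecoord0 B hB, Fcoord0 B hB, brL B hB _ n 1 p 0 (by norm_num), hx 0] at h
      have h2 : (n:ℂ) * ((t:ℂ) * B.repr (D2 (B (0, 1))) (t, 0)) = 0 := by
        linear_combination h - ((n:ℂ) * B.repr (D2 (B (0, 1))) (t, 0)) * hptc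
      exact (mul_eq_zero.mp h2).resolve_left hnc
    · have h := congrArg (fun w => B.repr w (p, 1)) (hC n)
      simp only [map_sub, map_smul, map_add, Finsupp.coe_sub, Finsupp.coe_smul,
        Finsupp.coe_add, Pi.sub_apply, Pi.smul_apply, Pi.add_apply, smul_eq_mul] at h
      rw [Ecoord1 B hB, Fcoord1 B hB, brE B hB, hpn, hx 0, hx 1] at h
      have h2 : (n:ℂ) * ((t:ℂ) * B.repr (D2 (B (0, 1))) (t, 1)
          - 2 * B.repr (D2 (B (0, 1))) (t, 0)) = 0 := by
        linear_combination h - ((n:ℂ) * B.repr (D2 (B (0, 1))) (t, 1)) * hptc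
      have h3 := (mul_eq_zero.mp h2).resolve_left hnc
      linear_combination h3
    · intro q
      have h := congrArg (fun w => B.repr w (p, q + 1 + 1)) (hC n)
      simp only [map_sub, map_smul, map_add, Finsupp.coe_sub, Finsupp.coe_smul,
        Finsupp.coe_add, Pi.sub_apply, Pi.smul_apply, Pi.add_apply, smul_eq_mul] at h
      rw [EcoordS B hB, FcoordS B hB, brS B hB, hpn, hx q, hx (q + 1), hx (q + 1 + 1)] at h
      push_cast at h
      have h2 : (n:ℂ) * ((t:ℂ) * B.repr (D2 (B (0, 1))) (t, q + 1 + 1)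
          - (1 - (q:ℂ)) * B.repr (D2 (B (0, 1))) (t, q + 1)) = 0 := by
        linear_combination h - ((n:ℂ) * B.repr (D2 (B (0, 1))) (t, q + 1 + 1)) * hptc
      have h3 := (mul_eq_zero.mp h2).resolve_left hnc
      linear_combination h3
  have hzero : ∀ t : ℤ, ∀ k : ℕ, ¬(t = 0 ∧ k = 2) →
      B.repr (D2 (B (0, 1))) (t, k) = 0 := by
    intro t
    obtain ⟨r0, r1, rS⟩ := hrel t
    by_cases ht : t = 0
    · subst ht
      have g0 : B.repr (D2 (B (0, 1))) ((0:ℤ), 0) = 0 := by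
        have h := r1
        simp only [Int.cast_zero, zero_mul] at h
        linear_combination -h / 2
      intro k hk
      rcases Nat.eq_zero_or_pos k with hk0 | hk0
      · subst hk0; exact g0
      · obtain ⟨q, rfl⟩ : ∃ q, k = q + 1 := ⟨k - 1, by omega⟩
        rcases Nat.eq_zero_or_pos q with hq0 | hq0
        · subst hq0
          have h := rS 0
          simp only [Int.cast_zero, zero_mul, Nat.cast_zero, sub_zero, one_mul] at h
          exact h.symm
        · obtain ⟨r, rfl⟩ : ∃ r, q = r + 1 := ⟨q - 1, by omega⟩
          have h := rS (r + 1)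
          simp only [Int.cast_zero, zero_mul] at h
          have hcoef : (1 : ℂ) - ((r:ℂ) + 1) ≠ 0 := by
            intro hc
            have : (r : ℂ) = 0 := by linear_combination -hc
            have : r = 0 := by exact_mod_cast this
            omega
          have h2 := (mul_eq_zero.mp h.symm).resolve_left (by push_cast at hcoef ⊢; exact hcoef)
          exact h2
    · have htc : (t:ℂ) ≠ 0 := Int.cast_ne_zero.mpr ht
      have gmain : ∀ k, B.repr (D2 (B (0, 1))) (t, k) = 0 := by
        intro k
        induction k with
        | zero => exact (mul_eq_zero.mp r0).resolve_left htc
        | succ k ih =>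
          cases k with
          | zero =>
            have h := r1
            rw [ih, mul_zero] at h
            exact (mul_eq_zero.mp h).resolve_left htc
          | succ q =>
            have h := rS q
            rw [ih, mul_zero] at h
            exact (mul_eq_zero.mp h).resolve_left htc
      intro k _
      exact gmain k
  apply B.repr.injective
  rw [map_smul, Basis.repr_self, Finsupp.smul_single, smul_eq_mul, mul_one]
  ext ⟨t, k⟩
  rw [Finsupp.single_apply]
  by_cases hik : ((0:ℤ), (2:ℕ)) = (t, k)
  · cases hik; rw [if_pos rfl]
  · rw [if_neg hik]
    apply hzero
    intro ⟨h1, h2⟩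
    exact hik (by rw [h1, h2])
end

section
variable {W : Type} [LieRing W] [LieAlgebra ℂ W]

theorem leib_sub (D D' : W →ₗ[ℂ] W)
    (h : ∀ x y : W, D ⁅x, y⁆ = ⁅D x, y⁆ + ⁅x, D y⁆)
    (h' : ∀ x y : W, D' ⁅x, y⁆ = ⁅D' x, y⁆ + ⁅x, D' y⁆) :
    ∀ x y : W, (D - D') ⁅x, y⁆ = ⁅(D - D') x, y⁆ + ⁅x, (D - D') y⁆ := by
  intro x y
  simp only [LinearMap.sub_apply, h x y, h' x y, sub_lie, lie_sub]
  abel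

theorem leib_add (D D' : W →ₗ[ℂ] W)
    (h : ∀ x y : W, D ⁅x, y⁆ = ⁅D x, y⁆ + ⁅x, D y⁆)
    (h' : ∀ x y : W, D' ⁅x, y⁆ = ⁅D' x, y⁆ + ⁅x, D' y⁆) :
    ∀ x y : W, (D + D') ⁅x, y⁆ = ⁅(D + D') x, y⁆ + ⁅x, (D + D') y⁆ := by
  intro x y
  simp only [LinearMap.add_apply, h x y, h' x y, add_lie, lie_add]
  abel

theorem leib_smul (c : ℂ) (D : W →ₗ[ℂ] W)
    (h : ∀ x y : W, D ⁅x, y⁆ = ⁅D x, y⁆ + ⁅x, D y⁆) :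
    ∀ x y : W, (c • D) ⁅x, y⁆ = ⁅(c • D) x, y⁆ + ⁅x, (c • D) y⁆ := by
  intro x y
  simp only [LinearMap.smul_apply, h x y, smul_add, smul_lie, lie_smul]

theorem leib_ad (z : W) :
    ∀ x y : W, (lmulW z) ⁅x, y⁆ = ⁅(lmulW z) x, y⁆ + ⁅x, (lmulW z) y⁆ := by
  intro x y
  simp only [lmulW_apply]
  exact leibniz_lie z x y

variable (B : Basis (ℤ × ℕ) ℂ W)
variable (hB : ∀ (m n : ℤ) (i j : ℕ),
      ⁅B (m, i), B (n, j)⁆ = ((n : ℂ) - (m : ℂ)) • B (m + n, i + j)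
        + ((j : ℂ) - (i : ℂ)) • B (m + n, i + j + 1))
include hB

theorem step2 (D1 : W →ₗ[ℂ] W)
    (hL1 : ∀ x y : W, D1 ⁅x, y⁆ = ⁅D1 x, y⁆ + ⁅x, D1 y⁆)
    (h1e : D1 (B (0, 0)) = 0) :
    ∀ n : ℤ, D1 (B (n, 0)) = ((n : ℂ) * B.repr (D1 (B (1, 0))) (1, 0)) • B (n, 0) := by
  have heig : ∀ n : ℤ, ⁅B (0, 0), D1 (B (n, 0))⁆ = ((n : ℤ) : ℂ) • D1 (B (n, 0)) := by
    intro n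
    have h := hL1 (B (0, 0)) (B (n, 0))
    rw [hB 0 n 0 0, h1e, zero_lie, zero_add] at h
    simp only [zero_add, add_zero, Int.cast_zero, Nat.cast_zero, sub_zero, sub_self,
      zero_smul, map_add, map_smul, map_zero] at h
    exact h.symm
  have hform : ∀ n : ℤ, D1 (B (n, 0)) = (B.repr (D1 (B (n, 0))) (n, 0)) • B (n, 0) :=
    fun n => lemK B hB _ n (heig n)
  set lam : ℤ → ℂ := fun k => B.repr (D1 (B (k, 0))) (k, 0) with hlam
  have h0 : lam 0 = 0 := by rw [hlam]; simp only [h1e, map_zero, Finsupp.coe_zero, Pi.zero_apply]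
  have hadd : ∀ m n : ℤ, m ≠ n → lam (m + n) = lam m + lam n := by
    intro m n hmn
    have h := hL1 (B (m, 0)) (B (n, 0))
    rw [hB m n 0 0] at h
    simp only [zero_add, add_zero, Nat.cast_zero, sub_self, zero_smul, map_add, map_smul] at h
    rw [hform (m + n), hform m, hform n, smul_lie, lie_smul, hB m n 0 0] at h
    simp only [zero_add, add_zero, Nat.cast_zero, sub_self, zero_smul] at h
    have h2 := congrArg (fun w => B.repr w (m + n, 0)) h
    simp only [map_smul, Finsupp.coe_smul, Pi.smul_apply, Basis.repr_self,
      Finsupp.single_apply, if_pos rfl, if_true, smul_eq_mul, mul_one, map_add, Finsupp.coe_add,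
      Pi.add_apply] at h2
    have hnm : (n : ℂ) - (m : ℂ) ≠ 0 := by
      intro hc
      apply hmn
      have : ((m : ℤ) : ℂ) = ((n : ℤ) : ℂ) := by linear_combination -hc
      exact_mod_cast this
    have h3 : ((n : ℂ) - (m : ℂ)) * (lam (m + n) - lam m - lam n) = 0 := by
      rw [hlam]
      linear_combination h2
    have h4 := (mul_eq_zero.mp h3).resolve_left hnm
    linear_combination h4
  intro n
  rw [hform n]
  have := lam_linear lam h0 hadd n
  rw [hlam] at this
  simp only at this
  rw [this]

theorem step4 (D3 : W →ₗ[ℂ] W)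
    (hL3 : ∀ x y : W, D3 ⁅x, y⁆ = ⁅D3 x, y⁆ + ⁅x, D3 y⁆)
    (h30 : ∀ n : ℤ, D3 (B (n, 0)) = 0)
    (h31 : D3 (B (0, 1)) = 0) :
    ∀ (n : ℤ) (i : ℕ), D3 (B (n, i)) = 0 := by
  have h0k : ∀ k : ℕ, D3 (B (0, k)) = 0 := by
    intro k
    induction k with
    | zero => exact h30 0
    | succ k ih =>
      rcases Nat.eq_zero_or_pos k with hk | hk
      · subst hk; exact h31
      · have h := hL3 (B (0, 0)) (B (0, k))
        rw [hB 0 0 0 k, h30 0, zero_lie, zero_add, ih, lie_zero] at h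
        simp only [zero_add, add_zero, sub_self, zero_smul, Nat.cast_zero, sub_zero,
          map_add, map_smul, map_zero] at h
        have hkc : (k : ℂ) ≠ 0 := Nat.cast_ne_zero.mpr hk.ne'
        exact (smul_eq_zero.mp h).resolve_left hkc
  have hrel : ∀ (n : ℤ) (k : ℕ), (n : ℂ) • D3 (B (n, k)) = (k : ℂ) • D3 (B (n, k + 1)) := by
    intro n k
    have h := hL3 (B (0, k)) (B (n, 0))
    rw [hB 0 n k 0, h0k k, h30 n, zero_lie, lie_zero, add_zero] at h
    simp only [zero_add, add_zero, Int.cast_zero, Nat.cast_zero, sub_zero, zero_sub, neg_smul,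
      map_add, map_smul, map_neg] at h
    rw [add_neg_eq_zero] at h
    exact h
  have hn1 : ∀ n : ℤ, D3 (B (n, 1)) = 0 := by
    intro n
    rcases eq_or_ne n 0 with rfl | hn
    · exact h0k 1
    obtain ⟨a, b, ha, hb, hab⟩ : ∃ a b : ℤ, a ≠ 0 ∧ b ≠ 0 ∧ a + b = n := by
      rcases eq_or_ne n 1 with rfl | hn1
      · exact ⟨-1, 2, by norm_num, by norm_num, by norm_num⟩
      · exact ⟨n - 1, 1, by omega, by omega, by omega⟩
    have hw : D3 ⁅⁅B (0, 1), B (a, 0)⁆, B (b, 0)⁆ = 0 := by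
      have hu1 : D3 ⁅B (0, 1), B (a, 0)⁆ = 0 := by
        rw [hL3, h0k 1, h30 a, zero_lie, lie_zero, add_zero]
      rw [hL3, hu1, h30 b, zero_lie, lie_zero, add_zero]
    have hvec : ⁅⁅B (0, 1), B (a, 0)⁆, B (b, 0)⁆
        = ((a:ℂ) * ((b:ℂ) - (a:ℂ))) • B (a + b, 1) - (b:ℂ) • B (a + b, 2)
          + (2:ℂ) • B (a + b, 3) := by
      rw [hB 0 a 1 0]
      simp only [zero_add, add_zero, Nat.reduceAdd]
      rw [add_lie, smul_lie, smul_lie, hB a b 1 0, hB a b 2 0]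
      simp only [zero_add, add_zero, Nat.reduceAdd, Nat.cast_zero, Nat.cast_one,
        Nat.cast_ofNat, sub_zero, zero_sub]
      push_cast
      module
    rw [hvec] at hw
    simp only [map_add, map_sub, map_smul] at hw
    have e2 : D3 (B (a + b, 2)) = ((a + b : ℤ) : ℂ) • D3 (B (a + b, 1)) := by
      have h := hrel (a + b) 1
      rw [Nat.cast_one, one_smul] at h
      exact h.symm
    have e3 : (2:ℂ) • D3 (B (a + b, 3)) = ((a + b : ℤ) : ℂ) • D3 (B (a + b, 2)) := by
      have h := hrel (a + b) 2
      rw [show ((2:ℕ):ℂ) = (2:ℂ) by norm_num] at h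
      exact h.symm
    rw [e3, e2] at hw
    simp only [smul_smul] at hw
    push_cast at hw
    have key : ((2:ℂ) * a * b) • D3 (B (a + b, 1)) = 0 := by
      rw [← hw]
      module
    have hcoef : (2:ℂ) * a * b ≠ 0 := by
      have hac : (a:ℂ) ≠ 0 := Int.cast_ne_zero.mpr ha
      have hbc : (b:ℂ) ≠ 0 := Int.cast_ne_zero.mpr hb
      simp [hac, hbc]
    have := (smul_eq_zero.mp key).resolve_left hcoef
    rw [← hab]
    exact this
  intro n i
  induction i with
  | zero => exact h30 n
  | succ i ih =>
    cases i with
    | zero => exact hn1 n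
    | succ j =>
      have h := hrel n (j + 1)
      rw [ih, smul_zero] at h
      have hjc : ((j + 1 : ℕ) : ℂ) ≠ 0 := Nat.cast_ne_zero.mpr (by omega)
      exact (smul_eq_zero.mp h.symm).resolve_left hjc
end

theorem stmt11 (W : Type) [LieRing W] [LieAlgebra ℂ W] (B : Basis (ℤ × ℕ) ℂ W)
    (hB : ∀ (m n : ℤ) (i j : ℕ),
      ⁅B (m, i), B (n, j)⁆ = ((n : ℂ) - (m : ℂ)) • B (m + n, i + j)
        + ((j : ℂ) - (i : ℂ)) • B (m + n, i + j + 1))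
    (D : W →ₗ[ℂ] W)
    (hD : ∀ x y : W, D ⁅x, y⁆ = ⁅D x, y⁆ + ⁅x, D y⁆) :
    -- there is a unique pair `(y, c)` with `D = ad_y + c • D₀`,
    -- where `D₀ (L_{n,i}) = n • L_{n,i}`
    ∃! p : W × ℂ, ∀ (n : ℤ) (i : ℕ),
      D (B (n, i)) = ⁅p.1, B (n, i)⁆ + (p.2 * (n : ℂ)) • B (n, i) := by
  have hDlin : ∀ x y : W, D ⁅x, y⁆ = ⁅D x, y⁆ + ⁅x, D y⁆ := hD
  set y1 : W := Tshift B (D (B (1, 0))) - D (B (0, 0)) with hy1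
  set D1 : W →ₗ[ℂ] W := D - lmulW y1 with hD1def
  have hL1 : ∀ x y : W, D1 ⁅x, y⁆ = ⁅D1 x, y⁆ + ⁅x, D1 y⁆ :=
    leib_sub D (lmulW y1) hDlin (leib_ad y1)
  have h1e : D1 (B (0, 0)) = 0 := by
    have hX : D (B (1, 0)) = ⁅D (B (0, 0)), B (1, 0)⁆ + ⁅B (0, 0), D (B (1, 0))⁆ := by
      have h := hDlin (B (0, 0)) (B (1, 0))
      rw [hB 0 1 0 0] at h
      simp only [zero_add, add_zero, Int.cast_zero, Int.cast_one, Nat.cast_zero, sub_zero,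
        sub_self, zero_smul, one_smul, map_add, map_smul, map_zero] at h
      exact h
    have hs1 := step1 B hB (D (B (0, 0))) (D (B (1, 0))) hX
    rw [hD1def]
    simp only [LinearMap.sub_apply, lmulW_apply]
    rw [sub_eq_zero, hy1]
    exact hs1.symm
  set c : ℂ := B.repr (D1 (B (1, 0))) (1, 0) with hc
  have h1n : ∀ n : ℤ, D1 (B (n, 0)) = ((n : ℂ) * c) • B (n, 0) := step2 B hB D1 hL1 h1e
  set D2 : W →ₗ[ℂ] W := D1 - c • D0 B with hD2def
  have hL2 : ∀ x y : W, D2 ⁅x, y⁆ = ⁅D2 x, y⁆ + ⁅x, D2 y⁆ :=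
    leib_sub D1 (c • D0 B) hL1 (leib_smul c (D0 B) (D0_leib B hB))
  have h20 : ∀ n : ℤ, D2 (B (n, 0)) = 0 := by
    intro n
    rw [hD2def]
    simp only [LinearMap.sub_apply, LinearMap.smul_apply, D0_basis, h1n n]
    try module
  have hG : D2 (B (0, 1)) = (B.repr (D2 (B (0, 1))) (0, 2)) • B (0, 2) :=
    step3 B hB D2 hL2 h20
  set g : ℂ := B.repr (D2 (B (0, 1))) (0, 2) with hg
  set D3 : W →ₗ[ℂ] W := D2 + g • D0 B - g • lmulW (B (0, 0)) with hD3def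
  have hL3 : ∀ x y : W, D3 ⁅x, y⁆ = ⁅D3 x, y⁆ + ⁅x, D3 y⁆ :=
    leib_sub _ _ (leib_add _ _ hL2 (leib_smul g _ (D0_leib B hB)))
      (leib_smul g _ (leib_ad _))
  have h30 : ∀ n : ℤ, D3 (B (n, 0)) = 0 := by
    intro n
    rw [hD3def]
    simp only [LinearMap.sub_apply, LinearMap.add_apply, LinearMap.smul_apply, lmulW_apply,
      D0_basis, h20 n]
    rw [hB 0 n 0 0]
    simp only [zero_add, add_zero, Int.cast_zero, Nat.cast_zero, sub_zero, sub_self,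
      zero_smul]
    try module
  have h31 : D3 (B (0, 1)) = 0 := by
    rw [hD3def]
    simp only [LinearMap.sub_apply, LinearMap.add_apply, LinearMap.smul_apply, lmulW_apply,
      D0_basis, hG]
    rw [hB 0 0 0 1]
    simp only [zero_add, add_zero, Int.cast_zero, Nat.cast_zero, Nat.cast_one, sub_zero,
      sub_self, zero_smul, one_smul, smul_zero]
    try module
  have hall : ∀ (n : ℤ) (i : ℕ), D3 (B (n, i)) = 0 := step4 B hB D3 hL3 h30 h31
  have hex : ∀ (n : ℤ) (i : ℕ), D (B (n, i))
      = ⁅y1 + g • B (0, 0), B (n, i)⁆ + ((c - g) * (n : ℂ)) • B (n, i) := by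
    intro n i
    have h := hall n i
    rw [hD3def] at h
    simp only [LinearMap.sub_apply, LinearMap.add_apply, LinearMap.smul_apply, lmulW_apply,
      D0_basis] at h
    rw [hD2def] at h
    simp only [LinearMap.sub_apply, LinearMap.smul_apply, D0_basis] at h
    rw [hD1def] at h
    simp only [LinearMap.sub_apply, lmulW_apply] at h
    rw [add_lie, smul_lie]
    have hcalc : D (B (n, i))
        = (D (B (n, i)) - ⁅y1, B (n, i)⁆ - c • ((n : ℂ) • B (n, i))
            + g • ((n : ℂ) • B (n, i)) - g • ⁅B (0, 0), B (n, i)⁆)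
          + (⁅y1, B (n, i)⁆ + g • ⁅B (0, 0), B (n, i)⁆ + ((c - g) * (n : ℂ)) • B (n, i)) := by
      module
    rw [hcalc, h, zero_add]
  refine ⟨(y1 + g • B (0, 0), c - g), hex, ?_⟩
  rintro ⟨y2, c2⟩ h2
  simp only at h2
  have key : ∀ (n : ℤ) (i : ℕ), ⁅y2 - (y1 + g • B (0, 0)), B (n, i)⁆
      = (((c - g) - c2) * (n : ℂ)) • B (n, i) := by
    intro n i
    have e3 := (h2 n i).symm.trans (hex n i)
    rw [sub_lie, show (((c - g) - c2) * (n : ℂ)) = (c - g) * n - c2 * n by ring, sub_smul]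
    exact sub_eq_sub_iff_add_eq_add.mpr (e3.trans (add_comm _ _))
  set z : W := y2 - (y1 + g • B (0, 0)) with hzdef
  have hz0 : ⁅B (0, 0), z⁆ = ((0 : ℤ) : ℂ) • z := by
    have hk := key 0 0
    simp only [Int.cast_zero, mul_zero, zero_smul] at hk
    have hsk : ⁅B (0, 0), z⁆ = -⁅z, B (0, 0)⁆ := by rw [lie_skew]
    rw [hsk, hk, neg_zero, Int.cast_zero, zero_smul]
  have hzform := lemK B hB z 0 hz0
  set z0 : ℂ := B.repr z (0, 0) with hz0def
  have hbr : ∀ (n : ℤ) (i : ℕ), ⁅z, B (n, i)⁆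
      = z0 • (((n : ℂ) - 0) • B (n, i) + ((i : ℂ) - 0) • B (n, i + 1)) := by
    intro n i
    rw [hzform, smul_lie, hB 0 n 0 i]
    simp only [zero_add, Int.cast_zero, Nat.cast_zero]
  have k10 := key 1 0
  rw [hbr 1 0] at k10
  simp only [Int.cast_one, Int.cast_zero, Nat.cast_zero, sub_zero, sub_self, zero_smul,
    add_zero, one_smul, mul_one] at k10
  have hz0eq : z0 = c - g - c2 := smul_basis_inj B (1, 0) _ _ k10
  have k11 := key 1 1
  rw [hbr 1 1] at k11
  simp only [Int.cast_one, Nat.cast_one, sub_zero, one_smul, mul_one, smul_add] at k11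
  have hz12 : z0 • B (1, 1 + 1) = 0 := by
    rw [← hz0eq] at k11
    exact add_eq_left.mp k11
  have hzz : z0 = 0 := by
    rcases smul_eq_zero.mp hz12 with h | h
    · exact h
    · exact absurd h (B.ne_zero (1, 1 + 1))
  have hcc : c2 = c - g := by
    have := hz0eq
    rw [hzz] at this
    linear_combination this
  have hyy : y2 = y1 + g • B (0, 0) := by
    have hz : z = 0 := by rw [hzform, hzz, zero_smul]
    rw [hzdef] at hz
    exact sub_eq_zero.mp hz
  simp only [Prod.mk.injEq]
  exact ⟨hyy, hcc⟩
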